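/- For a positive integer n, define the q-Sun polynomial g_n(x;q) = sum_{k=0}^{n} [n choose k]_q^2 * [2k choose k]_q * x^k in Z[q][x]. Then for every even divisor d of n, the cyclotomic polynomial Phi_d(q) divides every coefficient (as a polynomial in q) of sum_{k=0}^{n-1} q^k * g_k(x;q). -/
import Mathlib


open Polynomial Finset

/-- The Gaussian binomial coefficient `[n choose k]_q` as a polynomial in `ℤ[q]`,
defined via the `q`-Pascal recurrence `[n+1, k+1]_q = [n, k]_q + q^(k+1) [n, k+1]_q`. -/
noncomputable def qbinom : ℕ → ℕ → Polynomial ℤ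
  | _, 0 => 1
  | 0, _ + 1 => 0
  | n + 1, k + 1 => qbinom n k + Polynomial.X ^ (k + 1) * qbinom n (k + 1)

/-- The coefficient of `x^j` in `∑_{k=0}^{n-1} q^k g_k(x;q)`, where
`g_k(x;q) = ∑_j [k choose j]_q^2 [2j choose j]_q x^j`. -/
noncomputable def sumCoeff (n j : ℕ) : Polynomial ℤ :=
  ∑ k ∈ Finset.range n, Polynomial.X ^ k * (qbinom k j) ^ 2 * qbinom (2 * j) j

lemma qbinom_zero_right (n : ℕ) : qbinom n 0 = 1 := by cases n <;> rfl

lemma qbinom_zero_succ (k : ℕ) : qbinom 0 (k + 1) = 0 := rfl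

lemma qbinom_succ_succ (n k : ℕ) :
    qbinom (n + 1) (k + 1) = qbinom n k + X ^ (k + 1) * qbinom n (k + 1) := rfl

lemma qbinom_eq_zero : ∀ (n k : ℕ), n < k → qbinom n k = 0 := by
  intro n
  induction n with
  | zero =>
    intro k hk
    cases k with
    | zero => omega
    | succ k => rfl
  | succ n ih =>
    intro k hk
    cases k with
    | zero => omega
    | succ k =>
      rw [qbinom_succ_succ, ih k (by omega), ih (k + 1) (by omega)]
      ring

lemma qbinom_self : ∀ n : ℕ, qbinom n n = 1 := by
  intro n
  induction n with
  | zero => rfl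
  | succ n ih => rw [qbinom_succ_succ, ih, qbinom_eq_zero n (n + 1) (by omega)]; ring

lemma qbinom_one : ∀ n : ℕ, (X - 1) * qbinom n 1 = X ^ n - 1 := by
  intro n
  induction n with
  | zero => rw [qbinom_eq_zero 0 1 (by omega)]; ring
  | succ n ih =>
    rw [show qbinom (n + 1) 1 = qbinom n 0 + X ^ (0 + 1) * qbinom n (0 + 1) from rfl,
      qbinom_zero_right]
    calc (X - 1) * (1 + X ^ (0 + 1) * qbinom n (0 + 1))
        = (X - 1) + X * ((X - 1) * qbinom n 1) := by ring
      _ = (X - 1) + X * (X ^ n - 1) := by rw [ih]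
      _ = X ^ (n + 1) - 1 := by ring

lemma qbinom_ident : ∀ (n k : ℕ),
    (X ^ (k + 1) - 1) * qbinom n (k + 1) = (X ^ (n - k) - 1) * qbinom n k := by
  intro n
  induction n with
  | zero =>
    intro k
    rw [qbinom_zero_succ]
    simp
  | succ n ih =>
    intro k
    cases k with
    | zero =>
      rw [Nat.sub_zero, pow_one, qbinom_zero_right, qbinom_one (n + 1)]
      ring
    | succ k =>
      by_cases hk : k + 1 ≤ n
      · have ih1 := ih k
        have ih2 := ih (k + 1)
        set e := n - (k + 1) with he
        have h1 : n - k = e + 1 := by omega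
        have h2 : n + 1 - (k + 1) = e + 1 := by omega
        rw [h1] at ih1
        rw [h2, qbinom_succ_succ n (k + 1), qbinom_succ_succ n k]
        linear_combination ih1 + X ^ (k + 2) * ih2
      · rw [qbinom_eq_zero (n + 1) (k + 2) (by omega), show n + 1 - (k + 1) = 0 by omega]
        simp

/-- Evaluation of `qbinom` at a complex number. -/
noncomputable def bb (ζ : ℂ) (k j : ℕ) : ℂ := (Polynomial.aeval ζ) (qbinom k j)

lemma bb_def (ζ : ℂ) (k j : ℕ) : (Polynomial.aeval ζ) (qbinom k j) = bb ζ k j := rfl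

lemma bb_zero_right (ζ : ℂ) (k : ℕ) : bb ζ k 0 = 1 := by
  rw [bb, qbinom_zero_right]; simp

lemma bb_eq_zero (ζ : ℂ) {k j : ℕ} (h : k < j) : bb ζ k j = 0 := by
  rw [bb, qbinom_eq_zero k j h]; simp

lemma bb_self (ζ : ℂ) (k : ℕ) : bb ζ k k = 1 := by
  rw [bb, qbinom_self]; simp

lemma bb_pascal (ζ : ℂ) (n k : ℕ) :
    bb ζ (n + 1) (k + 1) = bb ζ n k + ζ ^ (k + 1) * bb ζ n (k + 1) := by
  rw [bb, qbinom_succ_succ]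
  simp [bb]

lemma bb_ident (ζ : ℂ) (n k : ℕ) :
    (ζ ^ (k + 1) - 1) * bb ζ n (k + 1) = (ζ ^ (n - k) - 1) * bb ζ n k := by
  have h := congrArg (Polynomial.aeval ζ) (qbinom_ident n k)
  simpa [bb] using h

section Root

variable {d : ℕ} {ζ : ℂ}

lemma bb_d (hζ : IsPrimitiveRoot ζ d) : ∀ j, 0 < j → j < d → bb ζ d j = 0 := by
  intro j
  induction j with
  | zero => intro h; omega
  | succ j ih =>
    intro _ hjd
    have key := bb_ident ζ d j
    have hne : ζ ^ (j + 1) - 1 ≠ 0 :=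
      sub_ne_zero.mpr (hζ.pow_ne_one_of_pos_of_lt (by omega) (by omega))
    rcases Nat.eq_zero_or_pos j with hj | hj
    · subst hj
      rw [bb_zero_right, Nat.sub_zero, hζ.pow_eq_one] at key
      simp only [sub_self, zero_mul, mul_one] at key
      exact (mul_eq_zero.mp key).resolve_left hne
    · rw [ih hj (by omega), mul_zero] at key
      exact (mul_eq_zero.mp key).resolve_left hne

lemma bb_shift (hζ : IsPrimitiveRoot ζ d) (hd0 : 0 < d) :
    ∀ m j, bb ζ (m + d) j = bb ζ m j + if d ≤ j then bb ζ m (j - d) else 0 := by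
  intro m
  induction m with
  | zero =>
    intro j
    simp only [Nat.zero_add]
    rcases Nat.eq_zero_or_pos j with h0 | h0
    · subst h0
      rw [bb_zero_right, bb_zero_right, if_neg (by omega)]
      ring
    rcases Nat.lt_trichotomy j d with hlt | heq | hgt
    · rw [bb_d hζ j h0 hlt, bb_eq_zero ζ h0, if_neg (by omega)]
      ring
    · subst heq
      rw [bb_self, bb_eq_zero ζ hd0, if_pos le_rfl, Nat.sub_self, bb_zero_right]
      ring
    · rw [bb_eq_zero ζ hgt, bb_eq_zero ζ (by omega : 0 < j), if_pos (by omega),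
        bb_eq_zero ζ (by omega : 0 < j - d)]
      ring
  | succ m ih =>
    intro j
    cases j with
    | zero =>
      rw [bb_zero_right, bb_zero_right, if_neg (by omega)]
      ring
    | succ j =>
      rw [show m + 1 + d = (m + d) + 1 by ring, bb_pascal, ih j, ih (j + 1), bb_pascal]
      by_cases hdj : d ≤ j
      · rw [if_pos hdj, if_pos (by omega : d ≤ j + 1), if_pos (by omega : d ≤ j + 1),
          show j + 1 - d = (j - d) + 1 by omega, bb_pascal]
        have hp : ζ ^ (j + 1) = ζ ^ (j - d + 1) := by
          rw [show j + 1 = (j - d + 1) + d by omega, pow_add, hζ.pow_eq_one, mul_one]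
        rw [hp]
        ring
      · by_cases hdj1 : d ≤ j + 1
        · rw [if_neg hdj, if_pos hdj1, if_pos hdj1, show j + 1 - d = 0 by omega,
            bb_zero_right, bb_zero_right]
          have hp : ζ ^ (j + 1) = 1 := by
            rw [show j + 1 = d by omega, hζ.pow_eq_one]
          rw [hp]
          ring
        · rw [if_neg hdj, if_neg hdj1, if_neg hdj1]
          ring

lemma bb_lucas (hζ : IsPrimitiveRoot ζ d) (hd0 : 0 < d) :
    ∀ m k j, k < d → bb ζ (m * d + k) j = (m.choose (j / d) : ℂ) * bb ζ k (j % d) := by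
  intro m
  induction m with
  | zero =>
    intro k j hk
    simp only [Nat.zero_mul, Nat.zero_add]
    rcases Nat.lt_or_ge j d with h | h
    · rw [Nat.div_eq_of_lt h, Nat.mod_eq_of_lt h]
      simp
    · rw [bb_eq_zero ζ (lt_of_lt_of_le hk h),
        Nat.choose_eq_zero_of_lt (Nat.div_pos h hd0)]
      simp
  | succ m ih =>
    intro k j hk
    rw [show (m + 1) * d + k = (m * d + k) + d by ring, bb_shift hζ hd0, ih k j hk]
    by_cases hdj : d ≤ j
    · rw [if_pos hdj, ih k (j - d) hk]
      have h2 : (j - d) % d = j % d := by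
        conv_rhs => rw [show j = j - d + d by omega]
        rw [Nat.add_mod_right]
      have h1 : (j - d) / d + 1 = j / d := by
        rw [← Nat.add_div_right _ hd0, show j - d + d = j by omega]
      obtain ⟨s, hs⟩ : ∃ s, j / d = s + 1 := ⟨(j - d) / d, h1.symm⟩
      have hs' : (j - d) / d = s := by omega
      rw [h2, hs, hs', Nat.choose_succ_succ]
      push_cast
      ring
    · rw [if_neg hdj, Nat.div_eq_of_lt (by omega)]
      simp

lemma sum_shift (hζ : IsPrimitiveRoot ζ d) (i j : ℕ) (hj : 0 < j) (hjd : j < d) :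
    ∑ k ∈ range d, ζ ^ k * (bb ζ k i * bb ζ k j)
      = ∑ k ∈ range d, ζ ^ (k + 1) * (bb ζ (k + 1) i * bb ζ (k + 1) j) := by
  have h0 : ζ ^ 0 * (bb ζ 0 i * bb ζ 0 j) = 0 := by
    rw [bb_eq_zero ζ hj]; ring
  have hd' : ζ ^ d * (bb ζ d i * bb ζ d j) = 0 := by
    rw [bb_d hζ j hj hjd]; ring
  have e1 := Finset.sum_range_succ (fun k => ζ ^ k * (bb ζ k i * bb ζ k j)) d
  have e2 := Finset.sum_range_succ' (fun k => ζ ^ k * (bb ζ k i * bb ζ k j)) d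
  rw [e1] at e2
  simp only [h0, hd', add_zero] at e2
  exact e2

lemma V_zero (hζ : IsPrimitiveRoot ζ d) (hd2 : 2 ≤ d) :
    ∀ s i j, i + j = s → i + j + 2 ≤ d →
      ∑ k ∈ range d, ζ ^ k * (bb ζ k i * bb ζ k j) = 0 := by
  intro s
  induction s using Nat.strong_induction_on with
  | _ s IH =>
    intro i j hsum hle
    rcases Nat.eq_zero_or_pos j with hj0 | hj0
    · subst hj0
      rcases Nat.eq_zero_or_pos i with hi0 | hi0
      · subst hi0
        simp only [bb_zero_right, mul_one]
        exact hζ.geom_sum_eq_zero (by omega)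
      · -- j = 0, i > 0 : mirrored computation
        obtain ⟨i', rfl⟩ : ∃ i', i = i' + 1 := ⟨i - 1, by omega⟩
        have hswap : ∑ k ∈ range d, ζ ^ k * (bb ζ k (i' + 1) * bb ζ k 0)
            = ∑ k ∈ range d, ζ ^ k * (bb ζ k 0 * bb ζ k (i' + 1)) :=
          Finset.sum_congr rfl fun k _ => by ring
        rw [hswap]
        have hV : ∑ k ∈ range d, ζ ^ k * (bb ζ k 0 * bb ζ k (i' + 1))
            = ζ * ∑ k ∈ range d, ζ ^ k * (bb ζ k 0 * bb ζ k i')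
              + ζ ^ (i' + 2) * ∑ k ∈ range d, ζ ^ k * (bb ζ k 0 * bb ζ k (i' + 1)) := by
          calc ∑ k ∈ range d, ζ ^ k * (bb ζ k 0 * bb ζ k (i' + 1))
              = ∑ k ∈ range d, ζ ^ (k + 1) * (bb ζ (k + 1) 0 * bb ζ (k + 1) (i' + 1)) :=
                sum_shift hζ 0 (i' + 1) (by omega) (by omega)
            _ = ∑ k ∈ range d, (ζ * (ζ ^ k * (bb ζ k 0 * bb ζ k i'))
                  + ζ ^ (i' + 2) * (ζ ^ k * (bb ζ k 0 * bb ζ k (i' + 1)))) := by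
                refine Finset.sum_congr rfl fun k _ => ?_
                simp only [bb_pascal, bb_zero_right]
                ring
            _ = _ := by rw [Finset.sum_add_distrib, ← Finset.mul_sum, ← Finset.mul_sum]
        rw [IH i' (by omega) 0 i' (by omega) (by omega), mul_zero, zero_add] at hV
        have hne : ζ ^ (i' + 2) - 1 ≠ 0 :=
          sub_ne_zero.mpr (hζ.pow_ne_one_of_pos_of_lt (by omega) (by omega))
        have h2 : (ζ ^ (i' + 2) - 1)
            * ∑ k ∈ range d, ζ ^ k * (bb ζ k 0 * bb ζ k (i' + 1)) = 0 := by
          linear_combination -hV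
        exact (mul_eq_zero.mp h2).resolve_left hne
    · obtain ⟨j', rfl⟩ : ∃ j', j = j' + 1 := ⟨j - 1, by omega⟩
      rcases Nat.eq_zero_or_pos i with hi0 | hi0
      · subst hi0
        have hV : ∑ k ∈ range d, ζ ^ k * (bb ζ k 0 * bb ζ k (j' + 1))
            = ζ * ∑ k ∈ range d, ζ ^ k * (bb ζ k 0 * bb ζ k j')
              + ζ ^ (j' + 2) * ∑ k ∈ range d, ζ ^ k * (bb ζ k 0 * bb ζ k (j' + 1)) := by
          calc ∑ k ∈ range d, ζ ^ k * (bb ζ k 0 * bb ζ k (j' + 1))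
              = ∑ k ∈ range d, ζ ^ (k + 1) * (bb ζ (k + 1) 0 * bb ζ (k + 1) (j' + 1)) :=
                sum_shift hζ 0 (j' + 1) (by omega) (by omega)
            _ = ∑ k ∈ range d, (ζ * (ζ ^ k * (bb ζ k 0 * bb ζ k j'))
                  + ζ ^ (j' + 2) * (ζ ^ k * (bb ζ k 0 * bb ζ k (j' + 1)))) := by
                refine Finset.sum_congr rfl fun k _ => ?_
                simp only [bb_pascal, bb_zero_right]
                ring
            _ = _ := by rw [Finset.sum_add_distrib, ← Finset.mul_sum, ← Finset.mul_sum]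
        rw [IH j' (by omega) 0 j' (by omega) (by omega), mul_zero, zero_add] at hV
        have hne : ζ ^ (j' + 2) - 1 ≠ 0 :=
          sub_ne_zero.mpr (hζ.pow_ne_one_of_pos_of_lt (by omega) (by omega))
        have h2 : (ζ ^ (j' + 2) - 1)
            * ∑ k ∈ range d, ζ ^ k * (bb ζ k 0 * bb ζ k (j' + 1)) = 0 := by
          linear_combination -hV
        exact (mul_eq_zero.mp h2).resolve_left hne
      · obtain ⟨i', rfl⟩ : ∃ i', i = i' + 1 := ⟨i - 1, by omega⟩
        have hV : ∑ k ∈ range d, ζ ^ k * (bb ζ k (i' + 1) * bb ζ k (j' + 1))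
            = ζ * ∑ k ∈ range d, ζ ^ k * (bb ζ k i' * bb ζ k j')
              + ζ ^ (j' + 2) * ∑ k ∈ range d, ζ ^ k * (bb ζ k i' * bb ζ k (j' + 1))
              + ζ ^ (i' + 2) * ∑ k ∈ range d, ζ ^ k * (bb ζ k (i' + 1) * bb ζ k j')
              + ζ ^ (i' + j' + 3)
                * ∑ k ∈ range d, ζ ^ k * (bb ζ k (i' + 1) * bb ζ k (j' + 1)) := by
          calc ∑ k ∈ range d, ζ ^ k * (bb ζ k (i' + 1) * bb ζ k (j' + 1))
              = ∑ k ∈ range d, ζ ^ (k + 1) * (bb ζ (k + 1) (i' + 1) * bb ζ (k + 1) (j' + 1)) :=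
                sum_shift hζ (i' + 1) (j' + 1) (by omega) (by omega)
            _ = ∑ k ∈ range d, (ζ * (ζ ^ k * (bb ζ k i' * bb ζ k j'))
                  + ζ ^ (j' + 2) * (ζ ^ k * (bb ζ k i' * bb ζ k (j' + 1)))
                  + ζ ^ (i' + 2) * (ζ ^ k * (bb ζ k (i' + 1) * bb ζ k j'))
                  + ζ ^ (i' + j' + 3)
                    * (ζ ^ k * (bb ζ k (i' + 1) * bb ζ k (j' + 1)))) := by
                refine Finset.sum_congr rfl fun k _ => ?_
                simp only [bb_pascal]
                ring
            _ = _ := by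
                rw [Finset.sum_add_distrib, Finset.sum_add_distrib, Finset.sum_add_distrib,
                  ← Finset.mul_sum, ← Finset.mul_sum, ← Finset.mul_sum, ← Finset.mul_sum]
        rw [IH (i' + j') (by omega) i' j' rfl (by omega),
          IH (i' + j' + 1) (by omega) i' (j' + 1) (by omega) (by omega),
          IH (i' + j' + 1) (by omega) (i' + 1) j' (by omega) (by omega),
          mul_zero, mul_zero, mul_zero, zero_add, zero_add, zero_add] at hV
        have hne : ζ ^ (i' + j' + 3) - 1 ≠ 0 :=
          sub_ne_zero.mpr (hζ.pow_ne_one_of_pos_of_lt (by omega) (by omega))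
        have h2 : (ζ ^ (i' + j' + 3) - 1)
            * ∑ k ∈ range d, ζ ^ k * (bb ζ k (i' + 1) * bb ζ k (j' + 1)) = 0 := by
          linear_combination -hV
        exact (mul_eq_zero.mp h2).resolve_left hne

end Root

theorem stmt_16 (n d : ℕ) (hn : 0 < n) (hd : d ∣ n) (hde : Even d) (hd0 : 0 < d) :
    ∀ j : ℕ, Polynomial.cyclotomic d ℤ ∣ sumCoeff n j := by
  intro j
  obtain ⟨m, rfl⟩ := hd
  obtain ⟨t, ht⟩ := hde
  have hd2 : 2 ≤ d := by omega
  set ζ : ℂ := Complex.exp (2 * Real.pi * Complex.I / d) with hzdef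
  have hζ : IsPrimitiveRoot ζ d := Complex.isPrimitiveRoot_exp d (by omega)
  have hmain : (Polynomial.aeval ζ) (sumCoeff (d * m) j) = 0 := by
    rw [sumCoeff, map_sum]
    simp only [map_mul, map_pow, aeval_X, bb_def]
    rw [← Finset.sum_mul]
    have hjd : j % d < d := Nat.mod_lt j hd0
    rcases Nat.lt_or_ge (2 * (j % d)) d with hcase | hcase
    · apply mul_eq_zero_of_left
      have hTblock : ∑ k ∈ range d, ζ ^ k * bb ζ k (j % d) ^ 2 = 0 := by
        have h := V_zero hζ hd2 (j % d + j % d) (j % d) (j % d) rfl (by omega)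
        calc ∑ k ∈ range d, ζ ^ k * bb ζ k (j % d) ^ 2
            = ∑ k ∈ range d, ζ ^ k * (bb ζ k (j % d) * bb ζ k (j % d)) :=
              Finset.sum_congr rfl fun k _ => by ring
          _ = 0 := h
      have hall : ∀ M : ℕ, ∑ k ∈ range (M * d), ζ ^ k * bb ζ k j ^ 2 = 0 := by
        intro M
        induction M with
        | zero => simp
        | succ M ihM =>
          rw [show (M + 1) * d = M * d + d by ring, Finset.sum_range_add, ihM, zero_add]
          calc ∑ i ∈ range d, ζ ^ (M * d + i) * bb ζ (M * d + i) j ^ 2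
              = ∑ i ∈ range d,
                  ((M.choose (j / d) : ℂ)) ^ 2 * (ζ ^ i * bb ζ i (j % d) ^ 2) := by
                refine Finset.sum_congr rfl fun i hi => ?_
                rw [bb_lucas hζ hd0 M i j (Finset.mem_range.mp hi),
                  show ζ ^ (M * d + i) = ζ ^ i by
                    rw [pow_add, pow_mul', hζ.pow_eq_one, one_pow, one_mul]]
                ring
            _ = 0 := by rw [← Finset.mul_sum, hTblock, mul_zero]
      rw [show d * m = m * d by ring]
      exact hall m
    · apply mul_eq_zero_of_right
      have hrep : 2 * j = (2 * (j / d) + 1) * d + (2 * (j % d) - d) := by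
        have h := Nat.div_add_mod j d
        have h1 : (2 * (j / d) + 1) * d = 2 * (d * (j / d)) + d := by ring
        omega
      rw [hrep, bb_lucas hζ hd0 _ _ _ (by omega),
        bb_eq_zero ζ (by omega : 2 * (j % d) - d < j % d), mul_zero]
  rw [← Polynomial.map_dvd_map (Int.castRingHom ℚ) Int.cast_injective (cyclotomic.monic d ℤ),
    Polynomial.map_cyclotomic, cyclotomic_eq_minpoly_rat hζ (by omega)]
  apply minpoly.dvd
  rw [show Int.castRingHom ℚ = algebraMap ℤ ℚ from rfl, aeval_map_algebraMap]
  exact hmain
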